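/- Let ᾱ : {0,1,...,n} → (0,1] be strictly decreasing. Define for each i the DDIM coefficient λ_i = √(1 - ᾱ_i) - √(ᾱ_i(1 - ᾱ_{i-1})/ᾱ_{i-1}). Suppose noise predictions at consecutive steps satisfy ‖ε_i - ε'_i‖ ≤ δ for all i, where ε_i is used in the exact update and ε'_i in the approximate update, both applied with the map x ↦ √(ᾱ_i/ᾱ_{i-1})·x + λ-terms. Then the accumulated deviation after n steps between the exact and approximate trajectories starting from the same x₀ is at most δ·∑_{i=1}^n (∏_{j=i+1}^n √(ᾱ_j/ᾱ_{j-1}))·λ_i. -/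
import Mathlib


open Finset in
theorem ddim_error_propagation
    {V : Type*} [NormedAddCommGroup V] [NormedSpace ℝ V]
    (n : ℕ) (αbar : ℕ → ℝ)
    (hmem : ∀ i ≤ n, 0 < αbar i ∧ αbar i ≤ 1)
    (hdec : ∀ i < n, αbar (i + 1) < αbar i)
    (lam : ℕ → ℝ)
    (hlam : ∀ i, lam i
      = Real.sqrt (1 - αbar i) - Real.sqrt (αbar i * (1 - αbar (i - 1)) / αbar (i - 1)))
    (ε ε' : ℕ → V) (δ : ℝ)
    (hδ : ∀ i, 1 ≤ i → i ≤ n → ‖ε i - ε' i‖ ≤ δ)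
    (X Y : ℕ → V) (x₀ : V)
    (hX0 : X 0 = x₀) (hY0 : Y 0 = x₀)
    (hX : ∀ i < n, X (i + 1)
      = Real.sqrt (αbar (i + 1) / αbar i) • X i + lam (i + 1) • ε (i + 1))
    (hY : ∀ i < n, Y (i + 1)
      = Real.sqrt (αbar (i + 1) / αbar i) • Y i + lam (i + 1) • ε' (i + 1)) :
    ‖X n - Y n‖
      ≤ δ * ∑ i ∈ Icc 1 n,
          (∏ j ∈ Icc (i + 1) n, Real.sqrt (αbar j / αbar (j - 1))) * lam i := by
  have key : ∀ m, m ≤ n → ‖X m - Y m‖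
      ≤ δ * ∑ i ∈ Icc 1 m,
          (∏ j ∈ Icc (i + 1) m, Real.sqrt (αbar j / αbar (j - 1))) * lam i := by
    intro m hm
    induction m with
    | zero => simp [hX0, hY0]
    | succ k ih =>
      have hkn : k < n := hm
      have hk : k ≤ n := le_of_lt hkn
      have ih := ih hk
      set c := Real.sqrt (αbar (k + 1) / αbar k) with hc
      have hcnn : 0 ≤ c := Real.sqrt_nonneg _
      -- facts on αbar
      obtain ⟨ha1, ha2⟩ := hmem (k + 1) hm
      obtain ⟨hb1, hb2⟩ := hmem k hk
      have hab : αbar (k + 1) < αbar k := hdec k hkn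
      -- lam (k+1) ≥ 0
      have hlamnn : 0 ≤ lam (k + 1) := by
        rw [hlam (k + 1)]
        have h1 : αbar (k + 1 - 1) = αbar k := by norm_num
        rw [h1]
        have harg : αbar (k + 1) * (1 - αbar k) / αbar k ≤ 1 - αbar (k + 1) := by
          rw [div_le_iff₀ hb1]
          nlinarith
        have := Real.sqrt_le_sqrt harg
        linarith
      -- δ ≥ 0
      have hδnn : 0 ≤ δ := le_trans (norm_nonneg _) (hδ (k + 1) (by omega) hm)
      -- the step estimate
      have hdiff : X (k + 1) - Y (k + 1)
          = c • (X k - Y k) + lam (k + 1) • (ε (k + 1) - ε' (k + 1)) := by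
        rw [hX k hkn, hY k hkn, smul_sub, smul_sub]
        abel
      have hstep : ‖X (k + 1) - Y (k + 1)‖
          ≤ c * ‖X k - Y k‖ + lam (k + 1) * ‖ε (k + 1) - ε' (k + 1)‖ := by
        rw [hdiff]
        calc ‖c • (X k - Y k) + lam (k + 1) • (ε (k + 1) - ε' (k + 1))‖
            ≤ ‖c • (X k - Y k)‖ + ‖lam (k + 1) • (ε (k + 1) - ε' (k + 1))‖ :=
              norm_add_le _ _
          _ = c * ‖X k - Y k‖ + lam (k + 1) * ‖ε (k + 1) - ε' (k + 1)‖ := by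
              rw [norm_smul, norm_smul, Real.norm_eq_abs, Real.norm_eq_abs,
                abs_of_nonneg hcnn, abs_of_nonneg hlamnn]
      -- sum manipulation
      have hsum : (∑ i ∈ Icc 1 (k + 1),
            (∏ j ∈ Icc (i + 1) (k + 1), Real.sqrt (αbar j / αbar (j - 1))) * lam i)
          = c * (∑ i ∈ Icc 1 k,
            (∏ j ∈ Icc (i + 1) k, Real.sqrt (αbar j / αbar (j - 1))) * lam i)
            + lam (k + 1) := by
        rw [Finset.sum_Icc_succ_top (by omega : 1 ≤ k + 1)]
        have hemp : Icc (k + 1 + 1) (k + 1) = (∅ : Finset ℕ) := by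
          apply Finset.Icc_eq_empty; omega
        rw [hemp, Finset.prod_empty, one_mul, Finset.mul_sum]
        congr 1
        apply Finset.sum_congr rfl
        intro i hi
        rw [Finset.mem_Icc] at hi
        rw [Finset.prod_Icc_succ_top (by omega : i + 1 ≤ k + 1)]
        have : αbar (k + 1 - 1) = αbar k := by norm_num
        rw [this]
        ring
      rw [hsum]
      have hεb := hδ (k + 1) (by omega) hm
      nlinarith [mul_le_mul_of_nonneg_left ih hcnn,
        mul_le_mul_of_nonneg_left hεb hlamnn, norm_nonneg (ε (k+1) - ε' (k+1))]
  exact key n le_rfl
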